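/- The interval matrix [A − Δ, A + Δ] (with A nonsingular) is regular if and only if the system |Ax| ≤ Δ|x| (entrywise absolute values) has only the trivial solution x = 0. -/

import Mathlib

open Matrix
open scoped ENNReal NNReal

lemma sign_mul_self_eq_abs (t : ℝ) : Real.sign t * t = |t| := by
  rcases lt_trichotomy t 0 with h | h | h
  · rw [Real.sign_of_neg h, abs_of_neg h]; ring
  · simp [h]
  · rw [Real.sign_of_pos h, abs_of_pos h]; ring

lemma abs_sign_le_one (t : ℝ) : |Real.sign t| ≤ 1 := by
  rcases lt_trichotomy t 0 with h | h | h
  · simp [Real.sign_of_neg h]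
  · simp [h]
  · simp [Real.sign_of_pos h]

theorem regular_iff_trivial_solution {n : ℕ} (A Δ : Matrix (Fin n) (Fin n) ℝ)
    (hA : A.det ≠ 0) (hΔ : ∀ i j, 0 ≤ Δ i j) :
    (∀ M : Matrix (Fin n) (Fin n) ℝ, (∀ i j, |M i j - A i j| ≤ Δ i j) → M.det ≠ 0) ↔
    (∀ x : Fin n → ℝ,
      (∀ i, |A.mulVec x i| ≤ Δ.mulVec (fun j => |x j|) i) → x = 0) := by
  constructor
  · intro hreg x hx
    by_contra hx0
    set y : Fin n → ℝ := A.mulVec x with hy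
    set d : Fin n → ℝ := Δ.mulVec (fun j => |x j|) with hd
    have hd0 : ∀ i, 0 ≤ d i := fun i => le_trans (abs_nonneg _) (hx i)
    set c : Fin n → ℝ := fun i => if d i = 0 then 0 else y i / d i with hc
    have hc1 : ∀ i, |c i| ≤ 1 := by
      intro i
      by_cases h : d i = 0
      · simp [hc, h]
      · have hdpos : 0 < d i := lt_of_le_of_ne (hd0 i) (Ne.symm h)
        simp only [hc, h, if_false]
        rw [abs_div, abs_of_pos hdpos, div_le_one hdpos]
        exact hx i
    set M : Matrix (Fin n) (Fin n) ℝ :=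
      fun i j => A i j - c i * Δ i j * Real.sign (x j) with hM
    have hMint : ∀ i j, |M i j - A i j| ≤ Δ i j := by
      intro i j
      have h1 : M i j - A i j = -(c i * Δ i j * Real.sign (x j)) := by
        simp [hM]
      rw [h1, abs_neg, abs_mul, abs_mul, abs_of_nonneg (hΔ i j)]
      calc |c i| * Δ i j * |Real.sign (x j)|
          ≤ 1 * Δ i j * 1 := by
            apply mul_le_mul (mul_le_mul_of_nonneg_right (hc1 i) (hΔ i j))
              (abs_sign_le_one _) (abs_nonneg _)
            have := hΔ i j; linarith
        _ = Δ i j := by ring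
    have hMx : M.mulVec x = 0 := by
      funext i
      have hsum : M.mulVec x i = y i - c i * d i := by
        simp only [hM, hy, hd, Matrix.mulVec, dotProduct]
        rw [Finset.mul_sum]
        rw [← Finset.sum_sub_distrib]
        congr 1
        funext j
        rw [← sign_mul_self_eq_abs (x j)]
        ring
      rw [Pi.zero_apply, hsum]
      by_cases h : d i = 0
      · have hyi : y i = 0 := by
          have h2 := hx i
          rw [h] at h2
          exact abs_eq_zero.mp (le_antisymm h2 (abs_nonneg _))
        simp [hc, h, hyi]
      · simp only [hc, h, if_false]
        field_simp
        ring
    have : M.det = 0 := by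
      rw [← Matrix.exists_mulVec_eq_zero_iff]
      exact ⟨x, hx0, hMx⟩
    exact hreg M hMint this
  · intro htriv M hM
    by_contra hdet
    obtain ⟨x, hx0, hMx⟩ := (Matrix.exists_mulVec_eq_zero_iff).mpr hdet
    have hx : ∀ i, |A.mulVec x i| ≤ Δ.mulVec (fun j => |x j|) i := by
      intro i
      have h1 : A.mulVec x i = ∑ j, (A i j - M i j) * x j := by
        have h2 : M.mulVec x i = 0 := by rw [hMx]; rfl
        simp only [Matrix.mulVec, dotProduct] at h2 ⊢
        rw [← sub_zero (∑ j, A i j * x j), ← h2, ← Finset.sum_sub_distrib]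
        congr 1; funext j; ring
      rw [h1]
      calc |∑ j, (A i j - M i j) * x j|
          ≤ ∑ j, |(A i j - M i j) * x j| := Finset.abs_sum_le_sum_abs _ _
        _ ≤ ∑ j, Δ i j * |x j| := by
            apply Finset.sum_le_sum
            intro j _
            rw [abs_mul, abs_sub_comm]
            exact mul_le_mul_of_nonneg_right (hM i j) (abs_nonneg _)
        _ = Δ.mulVec (fun j => |x j|) i := by
            simp [Matrix.mulVec, dotProduct]
    exact hx0 (htriv x hx)
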